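/- There exists a finite group G with a subnormal supersoluble subgroup X such that the normal closure X^G is not supersoluble. (For example, G = PSU_3(2) ⋊ C_2 of order 144 with X ≅ S_3 × S_3 inside a maximal subgroup H ≅ S_3 ≀ C_2 of index 2.) -/

import Mathlib

/-- A subgroup `H` of `G` is subnormal if there is a chain
`H = c 0 ≤ c 1 ≤ ... ≤ c n = G` with each term normal in the next. -/
def Subgroup.IsSubnormal' {G : Type*} [Group G] (H : Subgroup G) : Prop :=
  ∃ (n : ℕ) (c : Fin (n + 1) → Subgroup G),
    c 0 = H ∧ c (Fin.last n) = ⊤ ∧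
    ∀ i : Fin n, c i.castSucc ≤ c i.succ ∧
      ((c i.castSucc).subgroupOf (c i.succ)).Normal

/-- A group is supersoluble if it has a normal series (all terms normal in `G`)
with cyclic factors; the factor `c (i+1) / c i` being cyclic is expressed as
`c (i+1)` being generated by `c i` together with a single element. -/
def IsSupersolvable (G : Type*) [Group G] : Prop :=
  ∃ (n : ℕ) (c : Fin (n + 1) → Subgroup G),
    c 0 = ⊥ ∧ c (Fin.last n) = ⊤ ∧
    (∀ i, (c i).Normal) ∧
    ∀ i : Fin n, c i.castSucc ≤ c i.succ ∧
      ∃ g ∈ c i.succ, c i.succ ≤ c i.castSucc ⊔ Subgroup.zpowers g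

/-- The Fitting subgroup: the join of all normal nilpotent subgroups
(in a finite group, the largest normal nilpotent subgroup). -/
def fittingSubgroup (G : Type*) [Group G] : Subgroup G :=
  sSup {N : Subgroup G | N.Normal ∧ Group.IsNilpotent N}

instance fittingSubgroup_normal (G : Type*) [Group G] : (fittingSubgroup G).Normal := by
  constructor
  intro x hx g
  rw [fittingSubgroup, sSup_eq_iSup'] at hx ⊢
  refine Subgroup.iSup_induction
    (C := fun y => g * y * g⁻¹ ∈
      ⨆ (N : {N : Subgroup G // N.Normal ∧ Group.IsNilpotent N}), (N : Subgroup G))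
    _ hx (fun N y hy => ?_) (by simpa using Subgroup.one_mem _) (fun y z hy hz => ?_)
  · exact Subgroup.mem_iSup_of_mem N (N.2.1.conj_mem y hy g)
  · simpa [mul_assoc] using Subgroup.mul_mem _ hy hz

/-- `O_p(G)`: the join of all normal `p`-subgroups
(in a finite group, the largest normal `p`-subgroup). -/
def pCore (p : ℕ) (G : Type*) [Group G] : Subgroup G :=
  sSup {N : Subgroup G | N.Normal ∧ IsPGroup p N}

instance pCore_normal (p : ℕ) (G : Type*) [Group G] : (pCore p G).Normal := by
  constructor
  intro x hx g
  rw [pCore, sSup_eq_iSup'] at hx ⊢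
  refine Subgroup.iSup_induction
    (C := fun y => g * y * g⁻¹ ∈
      ⨆ (N : {N : Subgroup G // N.Normal ∧ IsPGroup p N}), (N : Subgroup G))
    _ hx (fun N y hy => ?_) (by simpa using Subgroup.one_mem _) (fun y z hy hz => ?_)
  · exact Subgroup.mem_iSup_of_mem N (N.2.1.conj_mem y hy g)
  · simpa [mul_assoc] using Subgroup.mul_mem _ hy hz

/-- `G` has a Sylow tower of supersoluble type: a normal series `⊥ = c 0 ≤ ... ≤ c n = ⊤`
(all terms normal in `G`) together with strictly decreasing primes `p 0 > p 1 > ... `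
exhausting the primes dividing `|G|`, such that each factor `c (i+1) / c i` is a
Sylow `p i`-subgroup of `G / c i` (i.e. has order the full `p i`-part of `|G|`). -/
def HasSupersolubleSylowTower (G : Type*) [Group G] : Prop :=
  ∃ (n : ℕ) (c : Fin (n + 1) → Subgroup G) (p : Fin n → ℕ),
    c 0 = ⊥ ∧ c (Fin.last n) = ⊤ ∧
    (∀ i, (c i).Normal) ∧
    (∀ i : Fin n, c i.castSucc ≤ c i.succ) ∧
    (∀ i, (p i).Prime) ∧
    (∀ i j : Fin n, i < j → p j < p i) ∧
    (∀ q : ℕ, q.Prime → q ∣ Nat.card G → ∃ i, p i = q) ∧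
    (∀ i : Fin n,
      Nat.card (c i.succ) = Nat.card (c i.castSucc) * p i ^ (Nat.card G).factorization (p i))


set_option maxRecDepth 4000
namespace S19

abbrev V := ZMod 3 × ZMod 3

def Tmap : V → V := fun p => (p.2, p.1 + p.2)
def Smap : V → V := fun p => (p.1 + p.2, 2 * p.2)

def actFn (k : ZMod 8) (e : ZMod 2) : V → V := fun v => (Tmap^[k.val]) ((Smap^[e.val]) v)
def actInv (k : ZMod 8) (e : ZMod 2) : V → V :=
  actFn (if e = 0 then -k else -(3*k)) e

lemma act_li : ∀ (k : ZMod 8) (e : ZMod 2) (v : V), actInv k e (actFn k e v) = v := by decide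
lemma act_ri : ∀ (k : ZMod 8) (e : ZMod 2) (v : V), actFn k e (actInv k e v) = v := by decide
lemma act_add : ∀ (k : ZMod 8) (e : ZMod 2) (v w : V),
    actFn k e (v + w) = actFn k e v + actFn k e w := by decide

def tri (e : ZMod 2) (k : ZMod 8) : ZMod 8 := if e = 0 then k else 3*k

lemma tri_li : ∀ e k, tri e (tri e k) = k := by decide
lemma tri_add : ∀ e k k', tri e (k + k') = tri e k + tri e k' := by decide
lemma tri_mul : ∀ e e' k, tri (e + e') k = tri e (tri e' k) := by decide

def triAut (e : ZMod 2) : MulAut (Multiplicative (ZMod 8)) :=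
{ toFun := fun k => Multiplicative.ofAdd (tri e k.toAdd),
  invFun := fun k => Multiplicative.ofAdd (tri e k.toAdd),
  left_inv := fun k => congrArg Multiplicative.ofAdd (tri_li e k.toAdd),
  right_inv := fun k => congrArg Multiplicative.ofAdd (tri_li e k.toAdd),
  map_mul' := fun a b => congrArg Multiplicative.ofAdd (tri_add e a.toAdd b.toAdd) }

def ψ : Multiplicative (ZMod 2) →* MulAut (Multiplicative (ZMod 8)) :=
{ toFun := fun e => triAut e.toAdd,
  map_one' := by
    apply MulEquiv.ext; intro k
    exact congrArg Multiplicative.ofAdd (by revert k; decide)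
  map_mul' := fun a b => by
    apply MulEquiv.ext; intro k
    exact congrArg Multiplicative.ofAdd (tri_mul a.toAdd b.toAdd k.toAdd) }

abbrev SD16 := Multiplicative (ZMod 8) ⋊[ψ] Multiplicative (ZMod 2)

def actAut (k : ZMod 8) (e : ZMod 2) : MulAut (Multiplicative V) :=
{ toFun := fun v => Multiplicative.ofAdd (actFn k e v.toAdd),
  invFun := fun v => Multiplicative.ofAdd (actInv k e v.toAdd),
  left_inv := fun v => congrArg Multiplicative.ofAdd (act_li k e v.toAdd),
  right_inv := fun v => congrArg Multiplicative.ofAdd (act_ri k e v.toAdd),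
  map_mul' := fun a b => congrArg Multiplicative.ofAdd (act_add k e a.toAdd b.toAdd) }

lemma act_one : ∀ v : V, actFn 0 0 v = v := by decide
lemma act_mul : ∀ (k1 : ZMod 8) (e1 : ZMod 2) (k2 : ZMod 8) (e2 : ZMod 2) (v : V),
    actFn (k1 + tri e1 k2) (e1 + e2) v = actFn k1 e1 (actFn k2 e2 v) := by decide

def φ : SD16 →* MulAut (Multiplicative V) :=
{ toFun := fun g => actAut g.left.toAdd g.right.toAdd,
  map_one' := by
    apply MulEquiv.ext; intro v
    exact congrArg Multiplicative.ofAdd (act_one v.toAdd)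
  map_mul' := fun a b => by
    apply MulEquiv.ext; intro v
    exact congrArg Multiplicative.ofAdd
      (act_mul a.left.toAdd a.right.toAdd b.left.toAdd b.right.toAdd v.toAdd) }

abbrev G := Multiplicative V ⋊[φ] SD16

def sdpEquiv {N H : Type*} [Group N] [Group H] (f : H →* MulAut N) :
    (N ⋊[f] H) ≃ N × H :=
⟨fun g => (g.left, g.right), fun p => ⟨p.1, p.2⟩, fun g => by cases g; rfl, fun _ => rfl⟩

instance {N H : Type*} [Group N] [Group H] (f : H →* MulAut N) [DecidableEq N] [DecidableEq H] :
    DecidableEq (N ⋊[f] H) := (sdpEquiv f).decidableEq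

instance {N H : Type*} [Group N] [Group H] (f : H →* MulAut N) [Fintype N] [Fintype H] :
    Fintype (N ⋊[f] H) := Fintype.ofEquiv _ (sdpEquiv f).symm

/-! ### Subgroups -/

def mkSub (p : G → Prop) [DecidablePred p] (h1 : p 1)
    (hmul : ∀ a b : G, p a → p b → p (a*b)) (hinv : ∀ a : G, p a → p a⁻¹) : Subgroup G :=
{ carrier := setOf p,
  one_mem' := h1,
  mul_mem' := fun ha hb => hmul _ _ ha hb,
  inv_mem' := fun ha => hinv _ ha }

lemma mem_mkSub (p : G → Prop) [DecidablePred p] {h1 hmul hinv} (g : G) :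
    g ∈ mkSub p h1 hmul hinv ↔ p g := Iff.rfl

instance (p : G → Prop) [DecidablePred p] {h1 hmul hinv} :
    DecidablePred (· ∈ mkSub p h1 hmul hinv) := fun g => decidable_of_iff (p g) Iff.rfl

def pX (g : G) : Prop := g.right.left.toAdd = 0 ∨ g.right.left.toAdd = 4
def pH (g : G) : Prop := (g.right.left.toAdd).val % 2 = 0
def pD1 (g : G) : Prop := g.right = 1 ∧ g.left.toAdd.2 = 0
def pD2 (g : G) : Prop := g.right = 1
def pD3 (g : G) : Prop := g.right.left = 1

instance : DecidablePred pX := fun g => inferInstanceAs (Decidable (_ ∨ _))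
instance : DecidablePred pH := fun g => inferInstanceAs (Decidable (_ = _))
instance : DecidablePred pD1 := fun g => inferInstanceAs (Decidable (_ ∧ _))
instance : DecidablePred pD2 := fun g => inferInstanceAs (Decidable (_ = _))
instance : DecidablePred pD3 := fun g => inferInstanceAs (Decidable (_ = _))

def Xg : Subgroup G := mkSub pX (by decide) (by decide) (by decide)
def Hg : Subgroup G := mkSub pH (by decide) (by decide) (by decide)
def D1 : Subgroup G := mkSub pD1 (by decide) (by decide) (by decide)
def D2 : Subgroup G := mkSub pD2 (by decide) (by decide) (by decide)
def D3 : Subgroup G := mkSub pD3 (by decide) (by decide) (by decide)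


/-! ### Distinguished elements -/

def g1 : G := ⟨Multiplicative.ofAdd ((1,0) : V), 1⟩
def g2 : G := ⟨Multiplicative.ofAdd ((0,1) : V), 1⟩
def gs : G := ⟨1, ⟨1, Multiplicative.ofAdd (1 : ZMod 2)⟩⟩
def gr4 : G := ⟨1, ⟨Multiplicative.ofAdd (4 : ZMod 8), 1⟩⟩
def w : G := ⟨1, ⟨Multiplicative.ofAdd (1 : ZMod 8), 1⟩⟩

/-! ### Decidable facts -/

lemma hXleH : ∀ g : G, pX g → pH g := by decide
lemma hXnormH : ∀ b : G, pH b → ∀ a : G, pX a → pX (b * a * b⁻¹) := by decide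
lemma hHnormG : ∀ b a : G, pH a → pH (b * a * b⁻¹) := by decide
lemma hcov : ∀ h : G, pH h → ∃ a : G, pX a ∧ pX (w⁻¹ * (a⁻¹ * h) * w) := by decide

lemma exp24 : ∀ g : G, g ^ 24 = 1 := by decide



/-! ### More decidable facts -/

lemma hg1X : pX g1 := by decide
lemma hg1D1 : pD1 g1 := by decide
lemma hg2X : pX g2 := by decide
lemma hg2D2 : pD2 g2 := by decide
lemma hgsX : pX gs := by decide
lemma hgsD3 : pD3 gs := by decide
lemma hgr4X : pX gr4 := by decide
lemma hgsne : gs ≠ (1 : G) := by decide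

lemma hD1X : ∀ g : G, pD1 g → pX g := by decide
lemma hD2X : ∀ g : G, pD2 g → pX g := by decide
lemma hD3X : ∀ g : G, pD3 g → pX g := by decide
lemma hD1D2 : ∀ g : G, pD1 g → pD2 g := by decide
lemma hD2D3 : ∀ g : G, pD2 g → pD3 g := by decide

lemma hD1nX : ∀ b : G, pX b → ∀ a : G, pD1 a → pD1 (b * a * b⁻¹) := by decide
lemma hD2nX : ∀ b : G, pX b → ∀ a : G, pD2 a → pD2 (b * a * b⁻¹) := by decide
lemma hD3nX : ∀ b : G, pX b → ∀ a : G, pD3 a → pD3 (b * a * b⁻¹) := by decide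

lemma hf1 : ∀ x : G, pD1 x → ∃ k : Fin 3, g1 ^ (k : ℕ) = x := by decide
lemma hf2 : ∀ x : G, pD2 x → ∃ k : Fin 3, pD1 (x * (g2 ^ (k : ℕ))⁻¹) := by decide
lemma hf3 : ∀ x : G, pD3 x → ∃ k : Fin 2, pD2 (x * (gs ^ (k : ℕ))⁻¹) := by decide
lemma hf4 : ∀ x : G, pX x → ∃ k : Fin 2, pD3 (x * (gr4 ^ (k : ℕ))⁻¹) := by decide


def bad (b : G) : Bool := decide (pH b) && (b != 1) && (decide (b^2 = 1) || decide (b^3 = 1)) &&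
  decide (∀ x : G, pH x → ∃ k : Fin 3, b ^ (k : ℕ) = x * b * x⁻¹)

set_option maxHeartbeats 1000000 in
set_option maxRecDepth 40000 in
lemma noNCb : ∀ b : G, bad b = false := by decide

lemma noNC : ¬ ∃ b : G, pH b ∧ b ≠ 1 ∧ (b ^ 2 = 1 ∨ b ^ 3 = 1) ∧
    ∀ x : G, pH x → ∃ k : Fin 3, b ^ (k : ℕ) = x * b * x⁻¹ := by
  rintro ⟨b, h1, h2, h3, h4⟩
  have hb := noNCb b
  simp only [bad, Bool.and_eq_false_iff, Bool.or_eq_false_iff, decide_eq_false_iff_not,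
    bne_eq_false_iff_eq, decide_eq_true_eq] at hb
  rcases hb with ((h | h) | h) | h
  · exact h h1
  · exact h2 h
  · rcases h3 with h3 | h3
    · exact h.1 h3
    · exact h.2 h3
  · exact h h4

/-! ### General lemmas -/

lemma L1 {Γ : Type*} [Group Γ] {A B : Subgroup Γ}
    (h : ∀ b ∈ B, ∀ a ∈ A, b * a * b⁻¹ ∈ A) : (A.subgroupOf B).Normal := by
  constructor
  intro n hn g
  rw [Subgroup.mem_subgroupOf] at hn ⊢
  simpa using h g g.2 n hn

lemma subgroupOf_mono {Γ : Type*} [Group Γ] {A B C : Subgroup Γ} (h : A ≤ B) :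
    A.subgroupOf C ≤ B.subgroupOf C := fun x hx =>
  Subgroup.mem_subgroupOf.mpr (h (Subgroup.mem_subgroupOf.mp hx))

lemma mem_zpowers_of_pow {Γ : Type*} [Group Γ] {K : Subgroup Γ} {g x : Γ}
    (hg : g ∈ K) (hx : x ∈ K) (k : ℕ) (h : g ^ k = x) :
    (⟨x, hx⟩ : K) ∈ Subgroup.zpowers (⟨g, hg⟩ : K) := by
  refine Subgroup.mem_zpowers_iff.mpr ⟨(k : ℤ), ?_⟩
  ext
  rw [SubgroupClass.coe_zpow, zpow_natCast]
  exact h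

lemma L2 {Γ : Type*} [Group Γ] {A B X' : Subgroup Γ} (hA : A ≤ X') {g : Γ} (hg : g ∈ X')
    (h : ∀ x ∈ B, ∃ k : ℕ, x * (g ^ k)⁻¹ ∈ A) :
    B.subgroupOf X' ≤ A.subgroupOf X' ⊔ Subgroup.zpowers (⟨g, hg⟩ : X') := by
  rintro ⟨x, hxX⟩ hx
  rw [Subgroup.mem_subgroupOf] at hx
  obtain ⟨k, hk⟩ := h x hx
  have hx' : (⟨x, hxX⟩ : X') = ⟨x * (g ^ k)⁻¹, hA hk⟩ * (⟨g, hg⟩ : X') ^ k := by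
    ext
    push_cast
    group
  rw [hx']
  exact Subgroup.mul_mem _
    ((le_sup_left : A.subgroupOf X' ≤ _) (Subgroup.mem_subgroupOf.mpr hk))
    ((le_sup_right : Subgroup.zpowers (⟨g, hg⟩ : X') ≤ _)
      (Subgroup.pow_mem _ (Subgroup.mem_zpowers _) k))

lemma coe_zpowers_mem {Γ : Type*} [Group Γ] {K : Subgroup Γ} {g x : ↥K}
    (h : x ∈ Subgroup.zpowers g) : (x : Γ) ∈ Subgroup.zpowers (g : Γ) := by
  obtain ⟨k, hk⟩ := Subgroup.mem_zpowers_iff.mp h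
  exact Subgroup.mem_zpowers_iff.mpr ⟨k, by rw [← hk, SubgroupClass.coe_zpow]⟩

lemma conjpow {Γ : Type*} [Group Γ] (n : ℕ) (x a : Γ) :
    (x * a * x⁻¹) ^ n = x * a ^ n * x⁻¹ := by
  induction n with
  | zero => simp
  | succ k ih => rw [pow_succ, pow_succ, ih]; group

lemma zpow_small {Γ : Type*} [Group Γ] {b y : Γ} {p : ℕ} (hp : 0 < p) (hple : p ≤ 3)
    (hb : b ^ p = 1) (h : ∃ j : ℤ, b ^ j = y) : ∃ k : Fin 3, b ^ (k : ℕ) = y := by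
  obtain ⟨j, rfl⟩ := h
  have hp' : (0 : ℤ) < (p : ℤ) := by exact_mod_cast hp
  have h0 : 0 ≤ j % (p : ℤ) := Int.emod_nonneg j (by omega)
  have h1 : j % (p : ℤ) < (p : ℤ) := Int.emod_lt_of_pos j hp'
  refine ⟨⟨(j % (p : ℤ)).toNat, by omega⟩, ?_⟩
  have hmod : b ^ j = b ^ (j % (p : ℤ)) := by
    conv_lhs => rw [← Int.emod_add_mul_ediv j (p : ℤ)]
    rw [zpow_add, zpow_mul, zpow_natCast, hb, one_zpow, mul_one]
  show b ^ ((j % (p : ℤ)).toNat) = b ^ j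
  rw [← zpow_natCast b ((j % (p : ℤ)).toNat), Int.toNat_of_nonneg h0]
  exact hmod.symm

lemma exists_cyclic_normal {K : Type*} [Group K] (hbt : (⊥ : Subgroup K) ≠ ⊤)
    (h : IsSupersolvable K) :
    ∃ g : K, g ≠ 1 ∧ ∀ x : K, x * g * x⁻¹ ∈ Subgroup.zpowers g := by
  obtain ⟨n, c, h0, hl, hnorm, hstep⟩ := h
  have key : ∃ i : Fin n, c i.castSucc = ⊥ ∧ c i.succ ≠ ⊥ := by
    by_contra hcon
    push_neg at hcon
    have hall : ∀ m : ℕ, ∀ hm : m ≤ n, c ⟨m, Nat.lt_succ_of_le hm⟩ = ⊥ := by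
      intro m
      induction m with
      | zero =>
        intro _
        have e : (⟨0, Nat.lt_succ_of_le (Nat.zero_le n)⟩ : Fin (n + 1)) = 0 := by
          ext; simp
        rw [e]; exact h0
      | succ k ih =>
        intro hm
        exact hcon ⟨k, hm⟩ (ih (Nat.le_of_succ_le hm))
    have hlast := hall n le_rfl
    have hlb : c (Fin.last n) = ⊥ := hlast
    exact hbt (by rw [← hlb, hl])
  obtain ⟨i, hibot, hine⟩ := key
  obtain ⟨-, g, hg, hsup⟩ := hstep i
  rw [hibot, bot_sup_eq] at hsup
  have hg1 : g ≠ 1 := by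
    rintro rfl
    apply hine
    refine le_antisymm (fun y hy => ?_) bot_le
    have := hsup hy
    rwa [Subgroup.zpowers_one_eq_bot] at this
  exact ⟨g, hg1, fun x => hsup ((hnorm i.succ).conj_mem g hg x)⟩

/-! ### Named subgroup facts -/

instance : Hg.Normal := ⟨fun a ha b => hHnormG b a ha⟩

lemma hNC : Subgroup.normalClosure (Xg : Set G) = Hg := by
  refine le_antisymm (Subgroup.normalClosure_le_normal (fun g hg => hXleH g hg)) ?_
  intro h hh
  obtain ⟨a, haX, hbX⟩ := hcov h hh
  have hb' : w * (w⁻¹ * (a⁻¹ * h) * w) * w⁻¹ ∈ Subgroup.normalClosure (Xg : Set G) :=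
    (Subgroup.normalClosure_normal (s := (Xg : Set G))).conj_mem _ (Subgroup.subset_normalClosure hbX) w
  have he : h = a * (w * (w⁻¹ * (a⁻¹ * h) * w) * w⁻¹) := by group
  rw [he]
  exact Subgroup.mul_mem _ (Subgroup.subset_normalClosure haX) hb'

lemma subnormal : Xg.IsSubnormal' := by
  refine ⟨2, ![Xg, Hg, ⊤], rfl, rfl, ?_⟩
  intro i
  fin_cases i
  · exact ⟨fun g hg => hXleH g hg, L1 (fun b hb a ha => hXnormH b hb a ha)⟩
  · exact ⟨le_top, L1 (fun b _ a ha => hHnormG b a ha)⟩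

lemma supersolvableX : IsSupersolvable ↥Xg := by
  refine ⟨4, ![⊥, D1.subgroupOf Xg, D2.subgroupOf Xg, D3.subgroupOf Xg, Xg.subgroupOf Xg],
    rfl, ?_, ?_, ?_⟩
  · show Xg.subgroupOf Xg = ⊤
    exact Subgroup.subgroupOf_self Xg
  · intro i
    fin_cases i
    · refine ⟨fun n hn g => ?_⟩
      have hn' : n ∈ (⊥ : Subgroup ↥Xg) := hn
      rw [Subgroup.mem_bot] at hn'
      subst hn'
      exact (show g * 1 * g⁻¹ ∈ (⊥ : Subgroup ↥Xg) by simp)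
    · exact L1 (fun b hb a ha => hD1nX b hb a ha)
    · exact L1 (fun b hb a ha => hD2nX b hb a ha)
    · exact L1 (fun b hb a ha => hD3nX b hb a ha)
    · show (Xg.subgroupOf Xg).Normal
      rw [Subgroup.subgroupOf_self]
      infer_instance
  · intro i
    fin_cases i
    · refine ⟨bot_le, ⟨g1, hg1X⟩, Subgroup.mem_subgroupOf.mpr hg1D1, ?_⟩
      show D1.subgroupOf Xg ≤ (⊥ : Subgroup ↥Xg) ⊔ Subgroup.zpowers (⟨g1, hg1X⟩ : ↥Xg)
      rw [bot_sup_eq]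
      rintro ⟨x, hxX⟩ hx
      rw [Subgroup.mem_subgroupOf] at hx
      obtain ⟨k, hk⟩ := hf1 x hx
      exact mem_zpowers_of_pow hg1X hxX (k : ℕ) hk
    · exact ⟨subgroupOf_mono (fun g hg => hD1D2 g hg), ⟨g2, hg2X⟩,
        Subgroup.mem_subgroupOf.mpr hg2D2,
        L2 (fun g hg => hD1X g hg) hg2X
          (fun x hx => (hf2 x hx).elim (fun k hk => ⟨(k : ℕ), hk⟩))⟩
    · exact ⟨subgroupOf_mono (fun g hg => hD2D3 g hg), ⟨gs, hgsX⟩,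
        Subgroup.mem_subgroupOf.mpr hgsD3,
        L2 (fun g hg => hD2X g hg) hgsX
          (fun x hx => (hf3 x hx).elim (fun k hk => ⟨(k : ℕ), hk⟩))⟩
    · exact ⟨subgroupOf_mono (fun g hg => hD3X g hg), ⟨gr4, hgr4X⟩,
        Subgroup.mem_subgroupOf.mpr hgr4X,
        L2 (fun g hg => hD3X g hg) hgr4X
          (fun x hx => (hf4 x hx).elim (fun k hk => ⟨(k : ℕ), hk⟩))⟩

lemma notSupersolvableH : ¬ IsSupersolvable ↥Hg := by
  intro hss
  have hgsH : gs ∈ Hg := hXleH gs hgsX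
  have hbt : (⊥ : Subgroup ↥Hg) ≠ ⊤ := by
    intro hbt
    have hmem : (⟨gs, hgsH⟩ : ↥Hg) ∈ (⊥ : Subgroup ↥Hg) := by rw [hbt]; trivial
    rw [Subgroup.mem_bot] at hmem
    exact hgsne (congrArg Subtype.val hmem)
  obtain ⟨g, hg1, hgc⟩ := exists_cyclic_normal hbt hss
  have haH : (g : G) ∈ Hg := g.2
  have ha1 : (g : G) ≠ 1 := fun h => hg1 (Subtype.ext h)
  have hconj : ∀ x ∈ Hg, x * (g : G) * x⁻¹ ∈ Subgroup.zpowers (g : G) := by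
    intro x hx
    have := coe_zpowers_mem (hgc ⟨x, hx⟩)
    simpa using this
  set a : G := (g : G) with ha
  set m := orderOf a with hmdef
  have hm24 : m ∣ 24 := orderOf_dvd_of_pow_eq_one (exp24 a)
  have hm1 : m ≠ 1 := fun h => ha1 (orderOf_eq_one_iff.mp h)
  have hmpos : 0 < m := orderOf_pos a
  set p := m.minFac with hpdef
  have hpp : p.Prime := Nat.minFac_prime hm1
  have hpm : p ∣ m := Nat.minFac_dvd m
  have hp24 : p ∣ 24 := hpm.trans hm24
  have hp23 : p = 2 ∨ p = 3 := by
    have h25 : p < 25 := lt_of_le_of_lt (Nat.le_of_dvd (by norm_num) hp24) (by norm_num)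
    have key : ∀ q < 25, Nat.Prime q → q ∣ 24 → q = 2 ∨ q = 3 := by decide
    exact key p h25 hpp hp24
  set b := a ^ (m / p) with hbdef
  have hbH : b ∈ Hg := Subgroup.pow_mem _ haH _
  have hdp : 0 < m / p := Nat.div_pos (Nat.minFac_le hmpos) hpp.pos
  have hbp : b ^ p = 1 := by
    rw [hbdef, ← pow_mul, Nat.div_mul_cancel hpm]
    exact pow_orderOf_eq_one a
  have hb1 : b ≠ 1 := by
    intro h
    have hd : m ∣ m / p := orderOf_dvd_of_pow_eq_one h
    have h2 := Nat.le_of_dvd hdp hd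
    have h3 := Nat.div_lt_self hmpos hpp.one_lt
    omega
  have hb23 : b ^ 2 = 1 ∨ b ^ 3 = 1 := by
    rcases hp23 with h | h
    · left; rw [h] at hbp; exact hbp
    · right; rw [h] at hbp; exact hbp
  have hbc : ∀ x : G, pH x → ∃ k : Fin 3, b ^ (k : ℕ) = x * b * x⁻¹ := by
    intro x hx
    obtain ⟨j, hj⟩ := Subgroup.mem_zpowers_iff.mp (hconj x hx)
    refine zpow_small hpp.pos (by omega) hbp ⟨j, ?_⟩
    have h1 : x * b * x⁻¹ = (x * a * x⁻¹) ^ (m / p) := (conjpow (m / p) x a).symm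
    calc b ^ j = (a ^ ((m / p : ℕ) : ℤ)) ^ j := by rw [zpow_natCast]
      _ = (a ^ j) ^ ((m / p : ℕ) : ℤ) := by rw [← zpow_mul, mul_comm, zpow_mul]
      _ = (a ^ j) ^ (m / p) := by rw [zpow_natCast]
      _ = (x * a * x⁻¹) ^ (m / p) := by rw [hj]
      _ = x * b * x⁻¹ := h1.symm
  exact noNC ⟨b, hbH, hb1, hb23, hbc⟩

end S19

/-- There is a finite group with a subnormal supersoluble subgroup whose normal
closure is not supersoluble. -/
theorem stmt_19 :
    ∃ (G : Type) (_ : Group G) (_ : Finite G) (X : Subgroup G),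
      X.IsSubnormal' ∧ IsSupersolvable X ∧
      ¬ IsSupersolvable (Subgroup.normalClosure (X : Set G)) := by
  refine ⟨S19.G, inferInstance, inferInstance, S19.Xg, S19.subnormal, S19.supersolvableX, ?_⟩
  rw [S19.hNC]
  exact S19.notSupersolvableH
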